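/- Let (φ, ψ) : (A, I, Ω_A) → (B, J, Ω_B) be a morphism of Φ-decomposition algebras. Then K = ker φ is a decomposition ideal of (A, I, Ω_A): for each i ∈ I, K = ⊕_{x ∈ X} (K ∩ A_x^i). -/

import Mathlib

/-- The kernel of a morphism `(φ, ψ)` of `Φ`-decomposition algebras is a decomposition
ideal: for each `i`, `ker φ = ⊕_{x ∈ X} (ker φ ∩ A_x^i)`. -/
theorem kernel_is_decomposition_ideal {R : Type*} [CommRing R]
    {A : Type*} [NonUnitalNonAssocRing A] [Module R A]
    {B : Type*} [NonUnitalNonAssocRing B] [Module R B]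
    {X : Type*} (law : X → X → Set X) {I J : Type*}
    (DA : I → X → Submodule R A) (DB : J → X → Submodule R B)
    (hindepA : ∀ i, iSupIndep (DA i)) (hsupA : ∀ i, ⨆ x, DA i x = ⊤)
    (hmulA : ∀ i x y, ∀ a ∈ DA i x, ∀ b ∈ DA i y, a * b ∈ ⨆ z ∈ law x y, DA i z)
    (hindepB : ∀ j, iSupIndep (DB j)) (hsupB : ∀ j, ⨆ x, DB j x = ⊤)
    (hmulB : ∀ j x y, ∀ a ∈ DB j x, ∀ b ∈ DB j y, a * b ∈ ⨆ z ∈ law x y, DB j z)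
    (φ : A →ₗ[R] B) (hφmul : ∀ a b : A, φ (a * b) = φ a * φ b)
    (ψ : I → J) (hφψ : ∀ i x, (DA i x).map φ ≤ DB (ψ i) x) :
    ∀ i, LinearMap.ker φ = ⨆ x, LinearMap.ker φ ⊓ DA i x := by
  intro i
  classical
  refine le_antisymm ?_ (iSup_le fun x => inf_le_left)
  intro a ha
  obtain ⟨f, hf⟩ := (Submodule.mem_iSup_iff_exists_dfinsupp' (DA i) a).mp
    (by rw [hsupA i]; trivial)
  set g : Π₀ x, DB (ψ i) x := DFinsupp.mapRange
    (fun x (v : DA i x) => (⟨φ v, hφψ i x ⟨v, v.2, rfl⟩⟩ : DB (ψ i) x))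
    (fun x => by ext; simp) f with hg
  have hgsum : (DFinsupp.lsum ℕ fun x => (DB (ψ i) x).subtype) g = 0 := by
    rw [DFinsupp.lsum_apply_apply, hg, DFinsupp.sumAddHom_apply,
      DFinsupp.sum_mapRange_index (by intro x; simp)]
    have : (f.sum fun x (v : DA i x) => φ v) = φ a := by
      rw [← hf, map_dfinsuppSum]
    simpa [DFinsupp.sum] using this.trans ha
  have hg0 : g = 0 := (hindepB (ψ i)).dfinsupp_lsum_injective (by rw [hgsum]; simp)
  have hfx : ∀ x, (f x : A) ∈ LinearMap.ker φ ⊓ DA i x := by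
    intro x
    refine ⟨?_, (f x).2⟩
    have h := congrArg (fun h => ((h x : DB (ψ i) x) : B)) hg0
    simpa [hg] using h
  rw [← hf]
  exact Submodule.dfinsuppSum_mem _ f _ fun x _ =>
    (le_iSup (fun x => LinearMap.ker φ ⊓ DA i x) x) (hfx x)
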